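/- Let $t_0 \in \mathbb{R}$, $n \ge 1$, $\vartheta \ge 1$, let $\Upsilon : \mathbb{R} \to \mathbb{R}$ be continuous with $\Upsilon(t) > 0$ for all $t \ge t_0$, let $\varrho_1, \dots, \varrho_n > 0$, and let $h_1, \dots, h_n : \mathbb{R} \to \mathbb{R}$ be differentiable on $[t_0, \infty)$ with $h_k(t_0) > 0$ for all $k$, satisfying $h_k'(t) = -\varrho_k\,\Upsilon(t)^{\vartheta k}\,h_k(t) + h_{k+1}(t)$ for $1 \le k \le n-1$ and $h_n'(t) \ge -\varrho_n\,\Upsilon(t)^{\vartheta n}\,h_n(t)$, all for $t \ge t_0$. Then for every $k \in \{1, \dots, n\}$ and every $t \ge t_0$, $h_k(t) \ge h_k(t_0)\,\exp\big(-\varrho_k \int_{t_0}^{t} \Upsilon(s)^{\vartheta k}\,ds\big) > 0$. -/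

import Mathlib

lemma gronwall_lower (t0 : ℝ) (a g g' : ℝ → ℝ) (ha : Continuous a)
    (hg : ∀ t, t0 ≤ t → HasDerivAt g (g' t) t)
    (hge : ∀ t, t0 ≤ t → -a t * g t ≤ g' t) :
    ∀ t, t0 ≤ t → g t0 * Real.exp (-∫ s in t0..t, a s) ≤ g t := by
  intro t ht
  set A : ℝ → ℝ := fun u => ∫ s in t0..u, a s with hA
  have hAderiv : ∀ u : ℝ, HasDerivAt A (a u) u := fun u =>
    intervalIntegral.integral_hasDerivAt_right (ha.intervalIntegrable _ _)
      (ha.stronglyMeasurableAtFilter _ _) ha.continuousAt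
  set φ : ℝ → ℝ := fun u => g u * Real.exp (A u) with hφ
  have hφd : ∀ u, t0 ≤ u → HasDerivAt φ ((g' u + a u * g u) * Real.exp (A u)) u := by
    intro u hu
    have : HasDerivAt φ (g' u * Real.exp (A u) + g u * (Real.exp (A u) * a u)) u :=
      (hg u hu).mul ((hAderiv u).exp)
    convert this using 1
    ring
  have hmono : MonotoneOn φ (Set.Ici t0) := by
    apply monotoneOn_of_deriv_nonneg (convex_Ici t0)
    · exact fun u hu => (hφd u hu).continuousAt.continuousWithinAt
    · intro u hu
      rw [interior_Ici] at hu
      exact ((hφd u (le_of_lt hu)).differentiableAt).differentiableWithinAt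
    · intro u hu
      rw [interior_Ici] at hu
      rw [(hφd u (le_of_lt hu)).deriv]
      have h1 : 0 ≤ g' u + a u * g u := by nlinarith [hge u (le_of_lt hu)]
      positivity
  have h0 : φ t0 ≤ φ t := hmono Set.self_mem_Ici ht ht
  have hA0 : A t0 = 0 := intervalIntegral.integral_same
  have hφ0 : φ t0 = g t0 := by simp [hφ, hA0]
  have hexp : (0:ℝ) < Real.exp (A t) := Real.exp_pos _
  have := mul_le_mul_of_nonneg_right h0 (le_of_lt (Real.exp_pos (-A t)))
  rw [hφ0] at this
  calc g t0 * Real.exp (-A t) ≤ φ t * Real.exp (-A t) := this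
    _ = g t := by
        simp only [hφ, Real.exp_neg]
        field_simp

/-- Proposition 2 (unperturbed `n`-th order chain): if the backstepping barriers satisfy
the exact chain relations `hₖ' = -ϱₖ Υ(t)^{ϑk} hₖ + h_{k+1}` for `1 ≤ k ≤ n-1` and the
QP constraint `hₙ' ≥ -ϱₙ Υ(t)^{ϑn} hₙ`, with `hₖ(t₀) > 0` for all `k`, then for every
`k ∈ {1, …, n}` and `t ≥ t₀`,
`hₖ(t) ≥ hₖ(t₀) exp(-ϱₖ ∫_{t₀}^t Υ(s)^{ϑk} ds) > 0`. -/
theorem chain_of_integrators_safety (t0 : ℝ) (n : ℕ) (hn : 1 ≤ n)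
    (ϑ : ℝ) (hϑ : 1 ≤ ϑ)
    (Υ : ℝ → ℝ) (hΥc : Continuous Υ) (hΥpos : ∀ t, t0 ≤ t → 0 < Υ t)
    (ϱ : ℕ → ℝ) (hϱ : ∀ k, 1 ≤ k → k ≤ n → 0 < ϱ k)
    (h h' : ℕ → ℝ → ℝ)
    (hinit : ∀ k, 1 ≤ k → k ≤ n → 0 < h k t0)
    (hderiv : ∀ k, 1 ≤ k → k ≤ n → ∀ t, t0 ≤ t → HasDerivAt (h k) (h' k t) t)
    (hchain : ∀ k, 1 ≤ k → k ≤ n - 1 → ∀ t, t0 ≤ t →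
      h' k t = -ϱ k * Υ t ^ (ϑ * (k : ℝ)) * h k t + h (k + 1) t)
    (hlast : ∀ t, t0 ≤ t → h' n t ≥ -ϱ n * Υ t ^ (ϑ * (n : ℝ)) * h n t) :
    ∀ k, 1 ≤ k → k ≤ n → ∀ t, t0 ≤ t →
      h k t ≥ h k t0 * Real.exp (-ϱ k * ∫ s in t0..t, Υ s ^ (ϑ * (k : ℝ))) ∧
      0 < h k t0 * Real.exp (-ϱ k * ∫ s in t0..t, Υ s ^ (ϑ * (k : ℝ))) := by
  have hacont : ∀ k : ℕ, 1 ≤ k → Continuous (fun s => ϱ k * Υ s ^ (ϑ * (k : ℝ))) := by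
    intro k hk
    have hnn : (0:ℝ) ≤ ϑ * (k : ℝ) := by positivity
    exact continuous_const.mul (hΥc.rpow_const (fun x => Or.inr hnn))
  have hint : ∀ k : ℕ, 1 ≤ k → ∀ t : ℝ,
      -ϱ k * ∫ s in t0..t, Υ s ^ (ϑ * (k : ℝ)) = -∫ s in t0..t, ϱ k * Υ s ^ (ϑ * (k : ℝ)) := by
    intro k hk t
    rw [intervalIntegral.integral_const_mul]
    ring
  have aux : ∀ m k, 1 ≤ k → k + m = n → ∀ t, t0 ≤ t →
      h k t0 * Real.exp (-ϱ k * ∫ s in t0..t, Υ s ^ (ϑ * (k : ℝ))) ≤ h k t := by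
    intro m
    induction m with
    | zero =>
      intro k hk1 hkn t ht
      have hkn' : k = n := by omega
      subst hkn'
      rw [hint k hk1 t]
      refine gronwall_lower t0 _ (h k) (h' k) (hacont k hk1) (hderiv k hk1 le_rfl) ?_ t ht
      intro u hu
      have := hlast u hu
      nlinarith [this]
    | succ m ih =>
      intro k hk1 hkn t ht
      have hkle : k ≤ n := by omega
      have hkle1 : k ≤ n - 1 := by omega
      rw [hint k hk1 t]
      refine gronwall_lower t0 _ (h k) (h' k) (hacont k hk1) (hderiv k hk1 hkle) ?_ t ht
      intro u hu
      have hnext : 0 < h (k + 1) u := by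
        have h1 : h (k+1) t0 * Real.exp (-ϱ (k+1) * ∫ s in t0..u, Υ s ^ (ϑ * ((k+1 : ℕ) : ℝ))) ≤ h (k+1) u :=
          ih (k+1) (by omega) (by omega) u hu
        have h2 : 0 < h (k+1) t0 := hinit (k+1) (by omega) (by omega)
        calc (0:ℝ) < h (k+1) t0 * Real.exp _ := by positivity
          _ ≤ h (k+1) u := h1
      rw [hchain k hk1 hkle1 u hu]
      nlinarith
  intro k hk1 hkn t ht
  refine ⟨aux (n - k) k hk1 (by omega) t ht, ?_⟩
  have := hinit k hk1 hkn
  positivity
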